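/- Let k ≥ 2 and M ≥ 1 be integers with M odd. Then det G = k(kM+2), where G is the Gram matrix of the maximally symmetric lattice; moreover the (2k−1)×(2k−1) block-diagonal matrix G_L = diag(k(kM+2)) ⊕ C ⊕ C (one 1×1 block k(kM+2) and two copies of the A_{k−1} Cartan matrix C) satisfies det G_L = k³(kM+2) = k² · det G. (Hence the sublattice L has index k in Γ: |L| = k²|Γ|.) -/

import Mathlib

open Matrix

/-- Entry of the `A_{k-1}` Cartan matrix, with 1-based indices `i, j ∈ {1, …, k-1}`:
`2` on the diagonal, `-1` for `|i-j| = 1`, `0` otherwise. -/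
def cartanEnt (i j : ℕ) : ℤ :=
  if i = j then 2 else if i + 1 = j ∨ j + 1 = i then -1 else 0

/-- Entry `(i, j)` (with `i, j ∈ {0, …, 2k-2}`) of the Gram matrix of the maximally
symmetric lattice `(M+2 | ¹A_{k-1} ¹A_{k-1})`: `G₀₀ = M+2`, `G₀₁ = G₁₀ = 1`,
`G₀ₖ = Gₖ₀ = -1`, the A-block `{1,…,k-1}` and B-block `{k,…,2k-2}` are two copies
of the `A_{k-1}` Cartan matrix, and all other entries vanish. -/
def gramEnt (k M i j : ℕ) : ℤ :=
  if i = 0 ∧ j = 0 then (M : ℤ) + 2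
  else if (i = 0 ∧ j = 1) ∨ (i = 1 ∧ j = 0) then 1
  else if (i = 0 ∧ j = k) ∨ (i = k ∧ j = 0) then -1
  else if i = 0 ∨ j = 0 then 0
  else if i < k ∧ j < k then cartanEnt i j
  else if k ≤ i ∧ k ≤ j then cartanEnt (i - (k - 1)) (j - (k - 1))
  else 0

/-- The Gram matrix `G` as a `(2k-1) × (2k-1)` rational matrix. -/
def gramM (k M : ℕ) : Matrix (Fin (2 * k - 1)) (Fin (2 * k - 1)) ℚ :=
  fun i j => (gramEnt k M i j : ℚ)

/-- The bilinear form `B(x, y) = xᵀ G y` on `ℚ^{2k-1}`. -/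
def bform (k M : ℕ) (x y : Fin (2 * k - 1) → ℚ) : ℚ :=
  x ⬝ᵥ (gramM k M).mulVec y


/-- The Gram matrix `G_L` of the decomposable sublattice
`L = (kM+2)ℤQ ⊕ A_{k-1} ⊕ A_{k-1}`: block diagonal with one `1×1` block
`k(kM+2)` and two copies of the `A_{k-1}` Cartan matrix. -/
def gramL (k M : ℕ) : Matrix (Fin (2 * k - 1)) (Fin (2 * k - 1)) ℚ :=
  Matrix.of fun i j =>
    if (i : ℕ) = 0 ∧ (j : ℕ) = 0 then (k : ℚ) * ((k : ℚ) * M + 2)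
    else if (i : ℕ) = 0 ∨ (j : ℕ) = 0 then 0
    else if (i : ℕ) < k ∧ (j : ℕ) < k then (cartanEnt i j : ℚ)
    else if k ≤ (i : ℕ) ∧ k ≤ (j : ℕ) then
      (cartanEnt ((i : ℕ) - (k - 1)) ((j : ℕ) - (k - 1)) : ℚ)
    else 0

/-- **Determinants of the maximally symmetric lattice and its sublattice `L`.**
For `k ≥ 2` and `M ≥ 1` odd, `det G = k(kM+2)`, while the block-diagonal Gram
matrix `G_L = diag(k(kM+2)) ⊕ C ⊕ C` satisfies `det G_L = k³(kM+2) = k² · det G`;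
hence `|L| = k²|Γ|`, i.e. `L ⊂ Γ` has index `k`. -/

def cE (i j : ℕ) : ℚ :=
  if i = j then 2 else if i + 1 = j ∨ j + 1 = i then -1 else 0

def Cn (n : ℕ) : Matrix (Fin n) (Fin n) ℚ := fun i j => cE i j

lemma cE_shift (i j : ℕ) : cE (i + 1) (j + 1) = cE i j := by
  unfold cE; split_ifs <;> first | rfl | omega

lemma Cn_sub (n : ℕ) : (Cn (n + 1)).submatrix Fin.succ Fin.succ = Cn n := by
  ext i j
  simp only [Cn, Matrix.submatrix_apply, Fin.val_succ]
  exact cE_shift i j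

lemma succAbove_one_val {n : ℕ} (j : Fin (n + 1)) :
    (((1 : Fin (n + 2)).succAbove j : Fin (n + 2)) : ℕ) =
      if (j : ℕ) < 1 then (j : ℕ) else (j : ℕ) + 1 := by
  rcases Nat.lt_or_ge (j : ℕ) 1 with h | h
  · have hlt : j.castSucc < (1 : Fin (n + 2)) := by
      rw [Fin.lt_iff_val_lt_val]; simpa using h
    rw [Fin.succAbove_of_castSucc_lt _ _ hlt, if_pos h, Fin.coe_castSucc]
  · have hle : (1 : Fin (n + 2)) ≤ j.castSucc := by
      rw [Fin.le_iff_val_le_val]; simpa using h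
    rw [Fin.succAbove_of_le_castSucc _ _ hle, if_neg (by omega), Fin.val_succ]

lemma detC : ∀ n, (Cn n).det = n + 1
  | 0 => by simp [Matrix.det_isEmpty]
  | 1 => by
      rw [Matrix.det_fin_one]
      norm_num [Cn, cE]
  | (n + 2) => by
      have h1 := detC (n + 1)
      have h0 := detC n
      rw [show ((n:ℕ)+2) = (n+1).succ from rfl, Matrix.det_succ_row_zero,
        Fin.sum_univ_succ, Fin.sum_univ_succ]
      have hz : ∀ j : Fin n, (-1 : ℚ) ^ ((j.succ.succ : Fin (n+2)) : ℕ) *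
          Cn (n+2) 0 j.succ.succ *
          ((Cn (n+2)).submatrix Fin.succ (j.succ.succ).succAbove).det = 0 := by
        intro j
        have : Cn (n+2) 0 j.succ.succ = 0 := by
          simp [Cn, cE]
          try omega
        rw [this]; ring
      rw [Finset.sum_congr rfl (fun j _ => hz j), Finset.sum_const_zero]
      have e0 : Cn (n+2) 0 0 = 2 := by simp [Cn, cE]
      have e1 : Cn (n+2) 0 1 = -1 := by
        simp [Cn, cE]
        try omega
      have m0 : ((Cn (n+2)).submatrix Fin.succ ((0 : Fin (n+2)).succAbove)).det = n + 2 := by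
        rw [Fin.succAbove_zero, Cn_sub, h1]; push_cast; ring
      -- the j = 1 minor
      have m1 : ((Cn (n+2)).submatrix Fin.succ ((1 : Fin (n+2)).succAbove)).det = -(n+1) := by
        set B := (Cn (n+2)).submatrix Fin.succ ((1 : Fin (n+2)).succAbove) with hB
        rw [Matrix.det_succ_column_zero, Fin.sum_univ_succ]
        have hz2 : ∀ i : Fin n, (-1 : ℚ) ^ ((i.succ : Fin (n+1)) : ℕ) * B i.succ 0 *
            (B.submatrix (i.succ).succAbove Fin.succ).det = 0 := by
          intro i
          have : B i.succ 0 = 0 := by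
            simp [hB, Cn, cE, succAbove_one_val]
            try omega
          rw [this]; ring
        rw [Finset.sum_congr rfl (fun i _ => hz2 i), Finset.sum_const_zero]
        have b00 : B 0 0 = -1 := by
          simp [hB, Cn, cE, succAbove_one_val]
        have sub2 : B.submatrix ((0 : Fin (n+1)).succAbove) Fin.succ = Cn n := by
          rw [Fin.succAbove_zero]
          ext i j
          simp only [hB, Matrix.submatrix_apply, Cn, Fin.val_succ, succAbove_one_val]
          rw [if_neg (by omega)]
          show cE (i + 1 + 1) (j + 1 + 1) = cE i j
          rw [cE_shift, cE_shift]
        rw [b00, sub2, h0]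
        simp only [Fin.val_zero, pow_zero]
        push_cast; ring
      simp only [Fin.succ_zero_eq_one, Fin.val_zero, Fin.val_one, pow_zero, pow_one]
      rw [e0, e1, m0, m1]
      push_cast; ring

-- index equivalence
def eIdx (m : ℕ) : Fin 1 ⊕ (Fin m ⊕ Fin m) ≃ Fin (2 * (m + 1) - 1) :=
  ((Equiv.sumCongr (Equiv.refl (Fin 1)) finSumFinEquiv).trans finSumFinEquiv).trans
    (finCongr (by omega))

lemma eIdx_inl (m : ℕ) (x : Fin 1) : ((eIdx m (Sum.inl x)) : ℕ) = 0 := by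
  simp [eIdx, finSumFinEquiv]
  try omega

lemma eIdx_inrl (m : ℕ) (i : Fin m) : ((eIdx m (Sum.inr (Sum.inl i))) : ℕ) = (i : ℕ) + 1 := by
  simp [eIdx, finSumFinEquiv]
  try omega

lemma eIdx_inrr (m : ℕ) (i : Fin m) :
    ((eIdx m (Sum.inr (Sum.inr i))) : ℕ) = (i : ℕ) + (m + 1) := by
  simp [eIdx, finSumFinEquiv]
  try omega


def vrow (m : ℕ) : Matrix (Fin 1) (Fin m ⊕ Fin m) ℚ :=
  fun _ s =>
    Sum.elim (fun i : Fin m => if (i : ℕ) = 0 then 1 else 0)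
      (fun i : Fin m => if (i : ℕ) = 0 then -1 else 0) s

def vcol (m : ℕ) : Matrix (Fin m ⊕ Fin m) (Fin 1) ℚ := fun s _ => vrow m 0 s

def DD (m : ℕ) : Matrix (Fin m ⊕ Fin m) (Fin m ⊕ Fin m) ℚ :=
  fromBlocks (Cn m) 0 0 (Cn m)


lemma cartan_cast (i j : ℕ) : ((cartanEnt (i + 1) (j + 1) : ℤ) : ℚ) = cE i j := by
  unfold cartanEnt cE
  split_ifs <;> first | omega | norm_num

section gE
variable {m M i j : ℕ}

lemma gE00 : gramEnt (m+1) M 0 0 = (M:ℤ) + 2 := by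
  unfold gramEnt; split_ifs <;> (try simp only [false_and, and_false, false_or, or_false, true_and, and_true, or_self,
      not_true, not_false_eq_true] at *) <;> omega

lemma gE0A (hi : i < m) : gramEnt (m+1) M 0 (i+1) = if i = 0 then 1 else 0 := by
  unfold gramEnt; split_ifs <;> (try simp only [false_and, and_false, false_or, or_false, true_and, and_true, or_self,
      not_true, not_false_eq_true] at *) <;> omega

lemma gEA0 (hi : i < m) : gramEnt (m+1) M (i+1) 0 = if i = 0 then 1 else 0 := by
  unfold gramEnt; split_ifs <;> (try simp only [false_and, and_false, false_or, or_false, true_and, and_true, or_self,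
      not_true, not_false_eq_true] at *) <;> omega

lemma gE0B (hm : 1 ≤ m) (hi : i < m) :
    gramEnt (m+1) M 0 (i+(m+1)) = if i = 0 then -1 else 0 := by
  unfold gramEnt; split_ifs <;> (try simp only [false_and, and_false, false_or, or_false, true_and, and_true, or_self,
      not_true, not_false_eq_true] at *) <;> omega

lemma gEB0 (hm : 1 ≤ m) (hi : i < m) :
    gramEnt (m+1) M (i+(m+1)) 0 = if i = 0 then -1 else 0 := by
  unfold gramEnt; split_ifs <;> (try simp only [false_and, and_false, false_or, or_false, true_and, and_true, or_self,
      not_true, not_false_eq_true] at *) <;> omega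

lemma gEAA (hi : i < m) (hj : j < m) :
    gramEnt (m+1) M (i+1) (j+1) = cartanEnt (i+1) (j+1) := by
  unfold gramEnt; split_ifs <;> (try simp only [false_and, and_false, false_or, or_false, true_and, and_true, or_self,
      not_true, not_false_eq_true] at *) <;> omega

lemma gEAB (hi : i < m) (hj : j < m) : gramEnt (m+1) M (i+1) (j+(m+1)) = 0 := by
  unfold gramEnt; split_ifs <;> (try simp only [false_and, and_false, false_or, or_false, true_and, and_true, or_self,
      not_true, not_false_eq_true] at *) <;> omega

lemma gEBA (hi : i < m) (hj : j < m) : gramEnt (m+1) M (i+(m+1)) (j+1) = 0 := by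
  unfold gramEnt; split_ifs <;> (try simp only [false_and, and_false, false_or, or_false, true_and, and_true, or_self,
      not_true, not_false_eq_true] at *) <;> omega

lemma gEBB (hi : i < m) (hj : j < m) :
    gramEnt (m+1) M (i+(m+1)) (j+(m+1)) = cartanEnt (i+1) (j+1) := by
  unfold gramEnt
  split_ifs <;>
    (try simp only [false_and, and_false, false_or, or_false, true_and, and_true, or_self,
      not_true, not_false_eq_true] at *) <;> first
      | omega
      | rw [show i+(m+1)-(m+1-1) = i+1 by omega, show j+(m+1)-(m+1-1) = j+1 by omega]

end gE

lemma gramM_block (m M : ℕ) (hm : 1 ≤ m) :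
    (gramM (m + 1) M).submatrix (eIdx m) (eIdx m) =
      fromBlocks (of fun _ _ => (M : ℚ) + 2) (vrow m) (vcol m) (DD m) := by
  ext s t
  rcases s with x | s | s <;> rcases t with y | t | t <;>
    simp only [Matrix.submatrix_apply, fromBlocks_apply₁₁, fromBlocks_apply₁₂,
      fromBlocks_apply₂₁, fromBlocks_apply₂₂, gramM, eIdx_inl, eIdx_inrl, eIdx_inrr,
      vrow, vcol, DD, Cn, Sum.elim_inl, Sum.elim_inr, Matrix.zero_apply, Matrix.of_apply]
  · rw [gE00]; push_cast; ring
  · rw [gE0A t.isLt]; split_ifs <;> norm_num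
  · rw [gE0B hm t.isLt]; split_ifs <;> norm_num
  · rw [gEA0 s.isLt]; split_ifs <;> norm_num
  · rw [gEAA s.isLt t.isLt]; exact cartan_cast s t
  · rw [gEAB s.isLt t.isLt]; norm_num
  · rw [gEB0 hm s.isLt]; split_ifs <;> norm_num
  · rw [gEBA s.isLt t.isLt]; norm_num
  · rw [gEBB s.isLt t.isLt]; exact cartan_cast s t

set_option maxHeartbeats 1000000 in
lemma gramL_block (m M : ℕ) (hm : 1 ≤ m) :
    (gramL (m + 1) M).submatrix (eIdx m) (eIdx m) =
      fromBlocks (of fun _ _ => ((m : ℚ) + 1) * (((m : ℚ) + 1) * M + 2)) 0 0 (DD m) := by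
  ext s t
  rcases s with x | s | s <;> rcases t with y | t | t <;>
  · first
    | (have hi := s.isLt; have hj := t.isLt) | (have hi := s.isLt) | (have hj := t.isLt) | skip
    simp only [Matrix.submatrix_apply, fromBlocks_apply₁₁, fromBlocks_apply₁₂,
      fromBlocks_apply₂₁, fromBlocks_apply₂₂, gramL, eIdx_inl, eIdx_inrl, eIdx_inrr,
      DD, Cn, Matrix.zero_apply, Matrix.of_apply]
    try unfold cartanEnt
    try unfold cE
    split_ifs <;>
      (try simp only [false_and, and_false, false_or, or_false, true_and, and_true, or_self,
        not_false_eq_true, not_true] at *) <;>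
      first | omega | (push_cast; ring)

noncomputable def cAf (m : ℕ) : ℕ → ℚ := fun a => -(((m : ℚ) - a) / ((m : ℚ) + 1))

noncomputable def cvec (m : ℕ) : Fin 1 ⊕ (Fin m ⊕ Fin m) → ℚ :=
  Sum.elim (fun _ => 1) (Sum.elim (fun i => cAf m i) (fun i => -cAf m i))

lemma sum_if_eq (m : ℕ) (p : ℕ → Prop) [DecidablePred p] (f : Fin m → ℚ) (a : ℕ) (ha : a < m)
    (hiff : ∀ i : Fin m, p (i : ℕ) ↔ (i : ℕ) = a) :
    (∑ i : Fin m, if p (i : ℕ) then f i else 0) = f ⟨a, ha⟩ := by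
  rw [Finset.sum_eq_single (⟨a, ha⟩ : Fin m)]
  · rw [if_pos ((hiff _).2 rfl)]
  · intro i _ hne
    rw [if_neg]
    intro hp
    exact hne (Fin.ext ((hiff i).1 hp))
  · intro h; exact absurd (Finset.mem_univ _) h

lemma sum_if_zero (m : ℕ) (p : ℕ → Prop) [DecidablePred p] (f : Fin m → ℚ)
    (h : ∀ i : Fin m, ¬ p (i : ℕ)) :
    (∑ i : Fin m, if p (i : ℕ) then f i else 0) = 0 :=
  Finset.sum_eq_zero fun i _ => if_neg (h i)

lemma sum_cA_mul_cE (m : ℕ) (hm : 1 ≤ m) (j : Fin m) :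
    (∑ i : Fin m, cAf m (i : ℕ) * cE (i : ℕ) (j : ℕ))
      = -(if (j : ℕ) = 0 then 1 else 0) := by
  have hm1 : ((m : ℚ) + 1) ≠ 0 := by positivity
  have hsplit : ∀ i : Fin m, cAf m (i : ℕ) * cE (i : ℕ) (j : ℕ) =
      ((if ((i : ℕ) = (j : ℕ)) then (2 : ℚ) * cAf m (i : ℕ) else 0)
        - (if ((i : ℕ) + 1 = (j : ℕ)) then cAf m (i : ℕ) else 0))
        - (if ((j : ℕ) + 1 = (i : ℕ)) then cAf m (i : ℕ) else 0) := by
    intro i; unfold cE; split_ifs <;> first | omega | ring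
  rw [Finset.sum_congr rfl fun i _ => hsplit i, Finset.sum_sub_distrib,
    Finset.sum_sub_distrib]
  rw [sum_if_eq m (fun x => x = (j : ℕ)) (fun i => (2 : ℚ) * cAf m (i : ℕ)) (j : ℕ) j.isLt
    (fun i => Iff.rfl)]
  rcases eq_or_ne (j : ℕ) 0 with hj0 | hj0
  · rw [sum_if_zero m (fun x => x + 1 = (j : ℕ)) _ (by omega)]
    rcases Nat.lt_or_ge ((j : ℕ) + 1) m with hjm | hjm
    · rw [sum_if_eq m (fun x => (j : ℕ) + 1 = x) (fun i => cAf m (i : ℕ)) ((j : ℕ) + 1) hjm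
        (by omega)]
      rw [if_pos hj0]
      show 2 * cAf m (j : ℕ) - 0 - cAf m ((j : ℕ) + 1) = -1
      rw [hj0]
      unfold cAf
      push_cast
      field_simp
      ring
    · have hmeq : m = 1 := by omega
      rw [sum_if_zero m (fun x => (j : ℕ) + 1 = x) _ (by omega)]
      rw [if_pos hj0]
      show 2 * cAf m (j : ℕ) - 0 - 0 = -1
      rw [hj0, hmeq]
      unfold cAf
      norm_num
  · have hj1 : 1 ≤ (j : ℕ) := by omega
    rw [if_neg hj0]
    rw [sum_if_eq m (fun x => x + 1 = (j : ℕ)) (fun i => cAf m (i : ℕ)) ((j : ℕ) - 1)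
      (by omega) (by omega)]
    have hc1 : ((((j : ℕ) - 1 : ℕ)) : ℚ) = ((j : ℕ) : ℚ) - 1 := by
      rw [Nat.cast_sub hj1, Nat.cast_one]
    rcases Nat.lt_or_ge ((j : ℕ) + 1) m with hjm | hjm
    · rw [sum_if_eq m (fun x => (j : ℕ) + 1 = x) (fun i => cAf m (i : ℕ)) ((j : ℕ) + 1) hjm
        (by omega)]
      show 2 * cAf m (j : ℕ) - cAf m ((j : ℕ) - 1) - cAf m ((j : ℕ) + 1) = -0
      unfold cAf
      rw [hc1]
      push_cast
      field_simp
      ring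
    · have hj2 : (j : ℕ) + 1 = m := by omega
      rw [sum_if_zero m (fun x => (j : ℕ) + 1 = x) _ (by omega)]
      show 2 * cAf m (j : ℕ) - cAf m ((j : ℕ) - 1) - 0 = -0
      unfold cAf
      rw [hc1]
      have hmc : (m : ℚ) = ((j : ℕ) : ℚ) + 1 := by exact_mod_cast hj2.symm
      rw [hmc]
      have hne : ((j : ℕ) : ℚ) + 1 + 1 ≠ 0 := by positivity
      field_simp
      ring

noncomputable def GM' (m M : ℕ) : Matrix (Fin 1 ⊕ (Fin m ⊕ Fin m)) (Fin 1 ⊕ (Fin m ⊕ Fin m)) ℚ :=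
  fromBlocks (of fun _ _ => (M : ℚ) + 2) (vrow m) (vcol m) (DD m)

lemma sum_mul_ind (m : ℕ) (hm : 1 ≤ m) (g : ℕ → ℚ) (v : ℚ) :
    (∑ i : Fin m, g (i : ℕ) * (if (i : ℕ) = 0 then v else 0)) = g 0 * v := by
  have h1 : (∑ i : Fin m, g (i : ℕ) * (if (i : ℕ) = 0 then v else 0))
      = ∑ i : Fin m, if (i : ℕ) = 0 then g (i : ℕ) * v else 0 :=
    Finset.sum_congr rfl fun i _ => by split_ifs <;> ring
  rw [h1, sum_if_eq m (fun x => x = 0) (fun i => g (i : ℕ) * v) 0 (by omega) (fun i => Iff.rfl)]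

lemma update_eq (m M : ℕ) (hm : 1 ≤ m) :
    (GM' m M).updateRow (Sum.inl 0) (∑ s, cvec m s • (GM' m M) s)
      = fromBlocks (of fun _ _ => (((m : ℚ) + 1) * (M : ℚ) + 2) / ((m : ℚ) + 1)) 0
          (vcol m) (DD m) := by
  have hm1 : ((m : ℚ) + 1) ≠ 0 := by positivity
  ext s t
  rw [Matrix.updateRow_apply]
  by_cases hs : s = Sum.inl 0
  · subst hs
    rw [if_pos rfl, Finset.sum_apply]
    simp only [Pi.smul_apply, smul_eq_mul]
    rw [Fintype.sum_sum_type, Fintype.sum_sum_type, Fin.sum_univ_one]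
    rcases t with y | j | j
    · simp only [cvec, GM', Sum.elim_inl, Sum.elim_inr, fromBlocks_apply₁₁,
        fromBlocks_apply₂₁, vcol, vrow, Matrix.of_apply]
      rw [sum_mul_ind m hm (fun a => cAf m a) 1,
        sum_mul_ind m hm (fun a => -cAf m a) (-1)]
      unfold cAf
      push_cast
      field_simp
      ring
    · simp only [cvec, GM', Sum.elim_inl, Sum.elim_inr, fromBlocks_apply₁₂,
        fromBlocks_apply₂₂, vrow, DD, fromBlocks_apply₁₁, fromBlocks_apply₂₁, Cn,
        Matrix.zero_apply, one_mul, mul_zero]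
      rw [Finset.sum_const_zero, sum_cA_mul_cE m hm j]
      split_ifs <;> ring
    · simp only [cvec, GM', Sum.elim_inl, Sum.elim_inr, fromBlocks_apply₁₂,
        fromBlocks_apply₂₂, vrow, DD, fromBlocks_apply₁₂, fromBlocks_apply₂₂, Cn,
        Matrix.zero_apply, one_mul, mul_zero]
      rw [Finset.sum_const_zero]
      have : (∑ i : Fin m, -cAf m (i : ℕ) * cE (i : ℕ) (j : ℕ))
          = -(∑ i : Fin m, cAf m (i : ℕ) * cE (i : ℕ) (j : ℕ)) := by
        rw [← Finset.sum_neg_distrib]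
        exact Finset.sum_congr rfl fun i _ => by ring
      rw [this, sum_cA_mul_cE m hm j]
      split_ifs <;> ring
  · rw [if_neg hs]
    rcases s with x | s
    · exact absurd (congrArg _ (Subsingleton.elim x 0)) hs
    rcases s with i | i <;> rcases t with y | j | j <;>
      simp [GM', vcol, vrow, DD]

lemma detDD (m : ℕ) : (DD m).det = ((m : ℚ) + 1) ^ 2 := by
  unfold DD
  rw [Matrix.det_fromBlocks_zero₁₂, detC m]
  ring

lemma detGM' (m M : ℕ) (hm : 1 ≤ m) :
    (GM' m M).det = ((m : ℚ) + 1) * (((m : ℚ) + 1) * (M : ℚ) + 2) := by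
  have hm1 : ((m : ℚ) + 1) ≠ 0 := by positivity
  have hup := Matrix.det_updateRow_sum (GM' m M) (Sum.inl 0) (cvec m)
  rw [update_eq m M hm, Matrix.det_fromBlocks_zero₁₂, Matrix.det_fin_one, Matrix.of_apply, detDD] at hup
  have hc : cvec m (Sum.inl 0) = 1 := rfl
  rw [hc, one_smul] at hup
  rw [← hup]
  field_simp

theorem gram_determinants (k M : ℕ) (hk : 2 ≤ k) (hM : 1 ≤ M) (hModd : Odd M) :
    (gramM k M).det = (k : ℚ) * ((k : ℚ) * M + 2) ∧
      (gramL k M).det = (k : ℚ) ^ 3 * ((k : ℚ) * M + 2) ∧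
      (gramL k M).det = (k : ℚ) ^ 2 * (gramM k M).det := by
  obtain ⟨m, rfl⟩ : ∃ m, k = m + 1 := ⟨k - 1, by omega⟩
  have hm : 1 ≤ m := by omega
  have hL : (gramL (m + 1) M).det = ((m : ℚ) + 1) ^ 3 * (((m : ℚ) + 1) * (M : ℚ) + 2) := by
    rw [← Matrix.det_submatrix_equiv_self (eIdx m) (gramL (m + 1) M), gramL_block m M hm,
      Matrix.det_fromBlocks_zero₁₂, Matrix.det_fin_one, Matrix.of_apply, detDD]
    ring
  have hG : (gramM (m + 1) M).det = ((m : ℚ) + 1) * (((m : ℚ) + 1) * (M : ℚ) + 2) := by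
    rw [← Matrix.det_submatrix_equiv_self (eIdx m) (gramM (m + 1) M), gramM_block m M hm]
    exact detGM' m M hm
  refine ⟨?_, ?_, ?_⟩
  · rw [hG]; push_cast; ring
  · rw [hL]; push_cast; ring
  · rw [hL, hG]; push_cast; ring
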